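/- For each i ∈ {2,3,4}, the function ψ̂_i defined by the recursion ψ̂_i(s,t) := (d(t)−s) ψ̂_{i−1}(s,t) + 2εt(i−1) ψ̂_{i−2}(s,t) satisfies ∂ψ̂_i/∂s(s,t) = −i ψ̂_{i−1}(s,t) and (L̂_d ψ̂_i)(s,t) = 0 for all s ∈ ℝ and t > 0. -/

import Mathlib

set_option maxHeartbeats 1600000

open MeasureTheory Set

/-- The complementary error function `erfc z = (2/√π) ∫_z^∞ e^{-u²} du`. -/
noncomputable def erfc (z : ℝ) : ℝ :=
  (2 / Real.sqrt Real.pi) * ∫ u in Set.Ioi z, Real.exp (-u ^ 2)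

/-- `ψ̂₀(s,t) = erfc((d(t)-s)/(2√(εt)))`. -/
noncomputable def psi0 (ε : ℝ) (d : ℝ → ℝ) (s t : ℝ) : ℝ :=
  erfc ((d t - s) / (2 * Real.sqrt (ε * t)))

/-- `Ê(s,t) = exp(-(s-d(t))²/(4εt))`. -/
noncomputable def Ehat (ε : ℝ) (d : ℝ → ℝ) (s t : ℝ) : ℝ :=
  Real.exp (-(s - d t) ^ 2 / (4 * ε * t))

/-- The operator `L̂_d F = -ε F_ss + â(d(t),t) F_s + F_t`. -/
noncomputable def Ld (ε : ℝ) (a : ℝ → ℝ → ℝ) (d : ℝ → ℝ) (F : ℝ → ℝ → ℝ) (s t : ℝ) : ℝ :=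
  -ε * iteratedDeriv 2 (fun x => F x t) s
    + a (d t) t * deriv (fun x => F x t) s
    + deriv (fun τ => F s τ) t

/-- The family of singular functions: `psih 0 = psi0`,
`psih 1 s t = (d t - s) * psi0 s t - 2 sqrt(εt/π) Ehat s t`, and recursively
`psih (i+2) s t = (d t - s) * psih (i+1) s t + 2εt(i+1) * psih i s t`. -/
noncomputable def psih (ε : ℝ) (d : ℝ → ℝ) : ℕ → ℝ → ℝ → ℝ
  | 0 => psi0 ε d
  | 1 => fun s t => (d t - s) * psi0 ε d s t - 2 * Real.sqrt (ε * t / Real.pi) * Ehat ε d s t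
  | n + 2 => fun s t =>
      (d t - s) * psih ε d (n + 1) s t + 2 * ε * t * (n + 1) * psih ε d n s t


section Aux

lemma gauss_integrable : Integrable (fun u : ℝ => Real.exp (-u ^ 2)) := by
  simpa using integrable_exp_neg_mul_sq (b := 1) one_pos

lemma gauss_cont : Continuous (fun u : ℝ => Real.exp (-u ^ 2)) := by
  fun_prop

lemma hasDerivAt_erfc (z : ℝ) :
    HasDerivAt erfc (-(2 / Real.sqrt Real.pi) * Real.exp (-z ^ 2)) z := by
  have hint := gauss_integrable
  have key : ∀ y : ℝ,
      erfc y = (2 / Real.sqrt Real.pi) *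
        ((∫ u, Real.exp (-u ^ 2))
          - (∫ u in Set.Iic (0:ℝ), Real.exp (-u ^ 2))
          - ∫ u in (0:ℝ)..y, Real.exp (-u ^ 2)) := by
    intro y
    have h1 : (∫ u in Set.Iic y, Real.exp (-u ^ 2))
        + (∫ u in Set.Ioi y, Real.exp (-u ^ 2)) = ∫ u, Real.exp (-u ^ 2) := by
      have := integral_add_compl (measurableSet_Iic (a := y)) hint
      simpa using this
    have h2 : (∫ u in Set.Iic y, Real.exp (-u ^ 2))
        - (∫ u in Set.Iic (0:ℝ), Real.exp (-u ^ 2))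
        = ∫ u in (0:ℝ)..y, Real.exp (-u ^ 2) :=
      intervalIntegral.integral_Iic_sub_Iic hint.integrableOn hint.integrableOn
    unfold erfc
    have : (∫ u in Set.Ioi y, Real.exp (-u ^ 2))
        = (∫ u, Real.exp (-u ^ 2)) - (∫ u in Set.Iic (0:ℝ), Real.exp (-u ^ 2))
          - ∫ u in (0:ℝ)..y, Real.exp (-u ^ 2) := by linarith
    rw [this]
  have hd : HasDerivAt (fun y : ℝ => ∫ u in (0:ℝ)..y, Real.exp (-u ^ 2))
      (Real.exp (-z ^ 2)) z :=
    intervalIntegral.integral_hasDerivAt_right hint.intervalIntegrable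
      (gauss_cont.stronglyMeasurableAtFilter _ _) gauss_cont.continuousAt
  have H := ((hasDerivAt_const z ((∫ u, Real.exp (-u ^ 2))
      - (∫ u in Set.Iic (0:ℝ), Real.exp (-u ^ 2)))).sub hd).const_mul
      (2 / Real.sqrt Real.pi)
  have H' : HasDerivAt erfc (2 / Real.sqrt Real.pi * (0 - Real.exp (-z ^ 2))) z :=
    H.congr_of_eventuallyEq (Filter.Eventually.of_forall key)
  convert H' using 1
  ring

lemma Ehat_eq (ε : ℝ) (d : ℝ → ℝ) (s t : ℝ) (h : 0 < ε * t) :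
    Ehat ε d s t = Real.exp (-((d t - s) / (2 * Real.sqrt (ε * t))) ^ 2) := by
  have hq2 : Real.sqrt (ε * t) ^ 2 = ε * t := Real.sq_sqrt h.le
  unfold Ehat
  congr 1
  rw [div_pow, mul_pow, hq2]
  ring

lemma psih1_eq (ε : ℝ) (d : ℝ → ℝ) (s t : ℝ) (h : 0 < ε * t) :
    psih ε d 1 s t = (d t - s) * psi0 ε d s t
      - 2 * (Real.sqrt (ε * t) / Real.sqrt Real.pi) * Ehat ε d s t := by
  show (d t - s) * psi0 ε d s t - 2 * Real.sqrt (ε * t / Real.pi) * Ehat ε d s t = _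
  rw [Real.sqrt_div h.le]

lemma Ehat_hasDerivAt_s (ε : ℝ) (d : ℝ → ℝ) (t : ℝ) (h : 0 < ε * t) (s : ℝ) :
    HasDerivAt (fun x => Ehat ε d x t)
      ((d t - s) / (2 * (ε * t)) * Ehat ε d s t) s := by
  have hb : HasDerivAt (fun x : ℝ => -(x - d t) ^ 2 / (4 * ε * t))
      (-((2:ℕ) * (s - d t) ^ 1 * 1) / (4 * ε * t)) s :=
    ((((hasDerivAt_id s).sub_const (d t)).pow 2).neg).div_const _
  have hc := hb.exp
  have : HasDerivAt (fun x => Ehat ε d x t)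
      (Real.exp (-(s - d t) ^ 2 / (4 * ε * t)) * (-((2:ℕ) * (s - d t) ^ 1 * 1) / (4 * ε * t))) s := hc
  convert this using 1
  show _ = Ehat ε d s t * _
  have hεne : ε ≠ 0 := left_ne_zero_of_mul h.ne'
  have htne : t ≠ 0 := right_ne_zero_of_mul h.ne'
  field_simp
  ring

lemma psi0_hasDerivAt_s (ε : ℝ) (d : ℝ → ℝ) (t : ℝ) (h : 0 < ε * t) (s : ℝ) :
    HasDerivAt (fun x => psi0 ε d x t)
      (Ehat ε d s t / (Real.sqrt Real.pi * Real.sqrt (ε * t))) s := by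
  have hq : 0 < Real.sqrt (ε * t) := Real.sqrt_pos.mpr h
  have hP : 0 < Real.sqrt Real.pi := Real.sqrt_pos.mpr Real.pi_pos
  have hz : HasDerivAt (fun y : ℝ => (d t - y) / (2 * Real.sqrt (ε * t)))
      ((0 - 1) / (2 * Real.sqrt (ε * t))) s :=
    ((hasDerivAt_const s (d t)).sub (hasDerivAt_id s)).div_const _
  have hcomp := (hasDerivAt_erfc ((d t - s) / (2 * Real.sqrt (ε * t)))).comp s hz
  have hmain : HasDerivAt (fun x => psi0 ε d x t)
      (-(2 / Real.sqrt Real.pi) * Real.exp (-((d t - s) / (2 * Real.sqrt (ε * t))) ^ 2)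
        * ((0 - 1) / (2 * Real.sqrt (ε * t)))) s := hcomp
  convert hmain using 1
  rw [← Ehat_eq ε d s t h]
  field_simp
  ring

lemma psih1_hasDerivAt_s (ε : ℝ) (d : ℝ → ℝ) (t : ℝ) (h : 0 < ε * t) (s : ℝ) :
    HasDerivAt (fun x => psih ε d 1 x t) (-psi0 ε d s t) s := by
  have hq : 0 < Real.sqrt (ε * t) := Real.sqrt_pos.mpr h
  have hq2 : Real.sqrt (ε * t) ^ 2 = ε * t := Real.sq_sqrt h.le
  have hP : 0 < Real.sqrt Real.pi := Real.sqrt_pos.mpr Real.pi_pos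
  have hmain : HasDerivAt (fun x => (d t - x) * psi0 ε d x t
      - 2 * Real.sqrt (ε * t / Real.pi) * Ehat ε d x t)
      (((0 - 1) * psi0 ε d s t + (d t - s) * (Ehat ε d s t / (Real.sqrt Real.pi * Real.sqrt (ε * t))))
        - 2 * Real.sqrt (ε * t / Real.pi) * ((d t - s) / (2 * (ε * t)) * Ehat ε d s t)) s :=
    (((hasDerivAt_const s (d t)).sub (hasDerivAt_id s)).mul (psi0_hasDerivAt_s ε d t h s)).sub
      ((Ehat_hasDerivAt_s ε d t h s).const_mul _)
  have : (fun x => psih ε d 1 x t) = fun x => (d t - x) * psi0 ε d x t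
      - 2 * Real.sqrt (ε * t / Real.pi) * Ehat ε d x t := rfl
  rw [this]
  convert hmain using 1
  have hεne : ε ≠ 0 := left_ne_zero_of_mul h.ne'
  have htne : t ≠ 0 := right_ne_zero_of_mul h.ne'
  rw [Real.sqrt_div h.le]
  field_simp
  ring_nf
  simp only [hq2]
  ring

lemma psih2_hasDerivAt_s (ε : ℝ) (d : ℝ → ℝ) (t : ℝ) (h : 0 < ε * t) (s : ℝ) :
    HasDerivAt (fun x => psih ε d 2 x t) (-2 * psih ε d 1 s t) s := by
  have hq : 0 < Real.sqrt (ε * t) := Real.sqrt_pos.mpr h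
  have hq2 : Real.sqrt (ε * t) ^ 2 = ε * t := Real.sq_sqrt h.le
  have hP : 0 < Real.sqrt Real.pi := Real.sqrt_pos.mpr Real.pi_pos
  have hmain : HasDerivAt (fun x => (d t - x) * psih ε d 1 x t
      + 2 * ε * t * (((0:ℕ):ℝ) + 1) * psih ε d 0 x t)
      (((0 - 1) * psih ε d 1 s t + (d t - s) * (-psi0 ε d s t))
        + 2 * ε * t * (((0:ℕ):ℝ) + 1) * (Ehat ε d s t / (Real.sqrt Real.pi * Real.sqrt (ε * t)))) s :=
    (((hasDerivAt_const s (d t)).sub (hasDerivAt_id s)).mul (psih1_hasDerivAt_s ε d t h s)).add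
      ((psi0_hasDerivAt_s ε d t h s).const_mul _)
  have : (fun x => psih ε d 2 x t) = fun x => (d t - x) * psih ε d 1 x t
      + 2 * ε * t * (((0:ℕ):ℝ) + 1) * psih ε d 0 x t := rfl
  rw [this]
  convert hmain using 1
  rw [psih1_eq ε d s t h]
  have hεne : ε ≠ 0 := left_ne_zero_of_mul h.ne'
  have htne : t ≠ 0 := right_ne_zero_of_mul h.ne'
  push_cast
  field_simp
  ring_nf
  simp only [hq2]
  ring

lemma psih3_hasDerivAt_s (ε : ℝ) (d : ℝ → ℝ) (t : ℝ) (h : 0 < ε * t) (s : ℝ) :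
    HasDerivAt (fun x => psih ε d 3 x t) (-3 * psih ε d 2 s t) s := by
  have hmain : HasDerivAt (fun x => (d t - x) * psih ε d 2 x t
      + 2 * ε * t * (((1:ℕ):ℝ) + 1) * psih ε d 1 x t)
      (((0 - 1) * psih ε d 2 s t + (d t - s) * (-2 * psih ε d 1 s t))
        + 2 * ε * t * (((1:ℕ):ℝ) + 1) * (-psi0 ε d s t)) s :=
    (((hasDerivAt_const s (d t)).sub (hasDerivAt_id s)).mul (psih2_hasDerivAt_s ε d t h s)).add
      ((psih1_hasDerivAt_s ε d t h s).const_mul _)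
  have : (fun x => psih ε d 3 x t) = fun x => (d t - x) * psih ε d 2 x t
      + 2 * ε * t * (((1:ℕ):ℝ) + 1) * psih ε d 1 x t := rfl
  rw [this]
  convert hmain using 1
  have h2 : psih ε d 2 s t = (d t - s) * psih ε d 1 s t
      + 2 * ε * t * (((0:ℕ):ℝ) + 1) * psih ε d 0 s t := rfl
  rw [h2, show psih ε d 0 s t = psi0 ε d s t from rfl]
  push_cast
  ring

lemma psih4_hasDerivAt_s (ε : ℝ) (d : ℝ → ℝ) (t : ℝ) (h : 0 < ε * t) (s : ℝ) :
    HasDerivAt (fun x => psih ε d 4 x t) (-4 * psih ε d 3 s t) s := by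
  have hmain : HasDerivAt (fun x => (d t - x) * psih ε d 3 x t
      + 2 * ε * t * (((2:ℕ):ℝ) + 1) * psih ε d 2 x t)
      (((0 - 1) * psih ε d 3 s t + (d t - s) * (-3 * psih ε d 2 s t))
        + 2 * ε * t * (((2:ℕ):ℝ) + 1) * (-2 * psih ε d 1 s t)) s :=
    (((hasDerivAt_const s (d t)).sub (hasDerivAt_id s)).mul (psih3_hasDerivAt_s ε d t h s)).add
      ((psih2_hasDerivAt_s ε d t h s).const_mul _)
  have : (fun x => psih ε d 4 x t) = fun x => (d t - x) * psih ε d 3 x t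
      + 2 * ε * t * (((2:ℕ):ℝ) + 1) * psih ε d 2 x t := rfl
  rw [this]
  convert hmain using 1
  have h3 : psih ε d 3 s t = (d t - s) * psih ε d 2 s t
      + 2 * ε * t * (((1:ℕ):ℝ) + 1) * psih ε d 1 s t := rfl
  rw [h3]
  push_cast
  ring

lemma sqrt_et_hasDerivAt (ε t : ℝ) (h : 0 < ε * t) :
    HasDerivAt (fun τ => Real.sqrt (ε * τ)) (ε / (2 * Real.sqrt (ε * t))) t := by
  have hin : HasDerivAt (fun τ : ℝ => ε * τ) (ε * 1) t := (hasDerivAt_id t).const_mul ε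
  have := (Real.hasDerivAt_sqrt h.ne').comp t hin
  refine this.congr_deriv ?_
  symm
  field_simp

lemma sqrt_etpi_hasDerivAt (ε t : ℝ) (h : 0 < ε * t) :
    HasDerivAt (fun τ => Real.sqrt (ε * τ / Real.pi))
      (ε / (2 * Real.sqrt Real.pi * Real.sqrt (ε * t))) t := by
  have hq : 0 < Real.sqrt (ε * t) := Real.sqrt_pos.mpr h
  have hP : 0 < Real.sqrt Real.pi := Real.sqrt_pos.mpr Real.pi_pos
  have hP2 : Real.sqrt Real.pi ^ 2 = Real.pi := Real.sq_sqrt Real.pi_pos.le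
  have hpos : 0 < ε * t / Real.pi := by positivity
  have hin : HasDerivAt (fun τ : ℝ => ε * τ / Real.pi) (ε * 1 / Real.pi) t :=
    ((hasDerivAt_id t).const_mul ε).div_const _
  have := (Real.hasDerivAt_sqrt hpos.ne').comp t hin
  refine this.congr_deriv ?_
  symm
  rw [Real.sqrt_div h.le]
  field_simp
  ring_nf
  simp only [hP2]

lemma Ehat_hasDerivAt_t (ε : ℝ) (d : ℝ → ℝ) (s t A : ℝ) (h : 0 < ε * t)
    (hA : HasDerivAt d A t) :
    HasDerivAt (fun τ => Ehat ε d s τ)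
      (Ehat ε d s t * ((ε * (d t - s) ^ 2 - 2 * (d t - s) * A * (ε * t)) / (4 * (ε * t) ^ 2))) t := by
  have hεne : ε ≠ 0 := left_ne_zero_of_mul h.ne'
  have htne : t ≠ 0 := right_ne_zero_of_mul h.ne'
  have hN : HasDerivAt (fun τ => -(s - d τ) ^ 2) (-((2:ℕ) * (s - d t) ^ 1 * (0 - A))) t :=
    (((hasDerivAt_const t s).sub hA).pow 2).neg
  have hD : HasDerivAt (fun τ : ℝ => 4 * ε * τ) (4 * ε * 1) t := by
    simpa [mul_assoc] using (hasDerivAt_id t).const_mul (4 * ε)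
  have hg := hN.div hD (by positivity : 4 * ε * t ≠ 0)
  have hmain := hg.exp
  have hfun : HasDerivAt (fun τ => Ehat ε d s τ)
      (Real.exp (-(s - d t) ^ 2 / (4 * ε * t)) *
        ((-((2:ℕ) * (s - d t) ^ 1 * (0 - A)) * (4 * ε * t) - -(s - d t) ^ 2 * (4 * ε * 1)) /
          (4 * ε * t) ^ 2)) t := hmain
  convert hfun using 1
  show Ehat ε d s t * _ = Ehat ε d s t * _
  congr 1
  field_simp
  ring

lemma psi0_hasDerivAt_t (ε : ℝ) (d : ℝ → ℝ) (s t A : ℝ) (h : 0 < ε * t)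
    (hA : HasDerivAt d A t) :
    HasDerivAt (fun τ => psi0 ε d s τ)
      (Ehat ε d s t * ((d t - s) * ε - 2 * A * (ε * t))
        / (2 * Real.sqrt Real.pi * Real.sqrt (ε * t) ^ 3)) t := by
  have hq : 0 < Real.sqrt (ε * t) := Real.sqrt_pos.mpr h
  have hP : 0 < Real.sqrt Real.pi := Real.sqrt_pos.mpr Real.pi_pos
  have hq2 : Real.sqrt (ε * t) ^ 2 = ε * t := Real.sq_sqrt h.le
  have hq3 : Real.sqrt (ε * t) ^ 3 = (ε * t) * Real.sqrt (ε * t) := by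
    rw [pow_succ, hq2]
  have hq4 : Real.sqrt (ε * t) ^ 4 = (ε * t) ^ 2 := by
    rw [show (4:ℕ) = 2 * 2 from rfl, pow_mul, hq2]
  have hq5 : Real.sqrt (ε * t) ^ 5 = (ε * t) ^ 2 * Real.sqrt (ε * t) := by
    rw [pow_succ, hq4]
  have hq6 : Real.sqrt (ε * t) ^ 6 = (ε * t) ^ 3 := by
    rw [show (6:ℕ) = 2 * 3 from rfl, pow_mul, hq2]
  have hεne : ε ≠ 0 := left_ne_zero_of_mul h.ne'
  have htne : t ≠ 0 := right_ne_zero_of_mul h.ne'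
  have hden : HasDerivAt (fun τ : ℝ => 2 * Real.sqrt (ε * τ))
      (2 * (ε / (2 * Real.sqrt (ε * t)))) t := (sqrt_et_hasDerivAt ε t h).const_mul 2
  have hz := (hA.sub_const s).div hden (by positivity : 2 * Real.sqrt (ε * t) ≠ 0)
  have hcomp := (hasDerivAt_erfc ((d t - s) / (2 * Real.sqrt (ε * t)))).comp t hz
  have hmain : HasDerivAt (fun τ => psi0 ε d s τ)
      (-(2 / Real.sqrt Real.pi) * Real.exp (-((d t - s) / (2 * Real.sqrt (ε * t))) ^ 2) *
        ((A * (2 * Real.sqrt (ε * t)) - (d t - s) * (2 * (ε / (2 * Real.sqrt (ε * t))))) /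
          (2 * Real.sqrt (ε * t)) ^ 2)) t := hcomp
  convert hmain using 1
  rw [← Ehat_eq ε d s t h]
  field_simp
  ring_nf
  simp only [hq2, hq3, hq4, hq5, hq6]
  ring_nf

lemma psih1_hasDerivAt_t (ε : ℝ) (d : ℝ → ℝ) (s t A : ℝ) (h : 0 < ε * t)
    (hA : HasDerivAt d A t) :
    HasDerivAt (fun τ => psih ε d 1 s τ)
      (A * psi0 ε d s t - ε * Ehat ε d s t / (Real.sqrt Real.pi * Real.sqrt (ε * t))) t := by
  have hq : 0 < Real.sqrt (ε * t) := Real.sqrt_pos.mpr h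
  have hP : 0 < Real.sqrt Real.pi := Real.sqrt_pos.mpr Real.pi_pos
  have hq2 : Real.sqrt (ε * t) ^ 2 = ε * t := Real.sq_sqrt h.le
  have hq3 : Real.sqrt (ε * t) ^ 3 = (ε * t) * Real.sqrt (ε * t) := by rw [pow_succ, hq2]
  have hq4 : Real.sqrt (ε * t) ^ 4 = (ε * t) ^ 2 := by
    rw [show (4:ℕ) = 2 * 2 from rfl, pow_mul, hq2]
  have hq5 : Real.sqrt (ε * t) ^ 5 = (ε * t) ^ 2 * Real.sqrt (ε * t) := by rw [pow_succ, hq4]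
  have hq6 : Real.sqrt (ε * t) ^ 6 = (ε * t) ^ 3 := by
    rw [show (6:ℕ) = 2 * 3 from rfl, pow_mul, hq2]
  have hεne : ε ≠ 0 := left_ne_zero_of_mul h.ne'
  have htne : t ≠ 0 := right_ne_zero_of_mul h.ne'
  have hterm1 := (hA.sub_const s).mul (psi0_hasDerivAt_t ε d s t A h hA)
  have hterm2 := ((sqrt_etpi_hasDerivAt ε t h).const_mul 2).mul
      (Ehat_hasDerivAt_t ε d s t A h hA)
  have hmain := hterm1.sub hterm2
  have hfun : HasDerivAt (fun τ => psih ε d 1 s τ)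
      ((A * psi0 ε d s t + (d t - s) * (Ehat ε d s t * ((d t - s) * ε - 2 * A * (ε * t))
          / (2 * Real.sqrt Real.pi * Real.sqrt (ε * t) ^ 3)))
        - ((2 * (ε / (2 * Real.sqrt Real.pi * Real.sqrt (ε * t)))) * Ehat ε d s t
          + (2 * Real.sqrt (ε * t / Real.pi)) *
            (Ehat ε d s t * ((ε * (d t - s) ^ 2 - 2 * (d t - s) * A * (ε * t)) / (4 * (ε * t) ^ 2))))) t := hmain
  convert hfun using 1
  rw [Real.sqrt_div h.le]
  field_simp
  ring_nf
  simp only [hq2, hq3, hq4, hq5, hq6]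
  ring_nf

lemma psih_hasDerivAt_t_step (ε : ℝ) (d : ℝ → ℝ) (n : ℕ) (s t A D1 D0 : ℝ)
    (hA : HasDerivAt d A t)
    (h1 : HasDerivAt (fun τ => psih ε d (n + 1) s τ) D1 t)
    (h0 : HasDerivAt (fun τ => psih ε d n s τ) D0 t) :
    HasDerivAt (fun τ => psih ε d (n + 2) s τ)
      (A * psih ε d (n + 1) s t + (d t - s) * D1
        + 2 * ε * ((n : ℝ) + 1) * psih ε d n s t + 2 * ε * t * ((n : ℝ) + 1) * D0) t := by
  have hfun : (fun τ => psih ε d (n + 2) s τ)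
      = fun τ => (d τ - s) * psih ε d (n + 1) s τ
          + 2 * ε * τ * (((n : ℕ) : ℝ) + 1) * psih ε d n s τ := rfl
  rw [hfun]
  have hcoef : HasDerivAt (fun τ : ℝ => 2 * ε * τ * (((n : ℕ) : ℝ) + 1))
      (2 * ε * (((n : ℕ) : ℝ) + 1)) t := by
    simpa [mul_assoc] using ((hasDerivAt_id t).const_mul (2 * ε)).mul_const (((n : ℕ) : ℝ) + 1)
  have hmain := ((hA.sub_const s).mul h1).add (hcoef.mul h0)
  refine hmain.congr_deriv ?_
  ring

end Aux

/-- for each `i ∈ {2,3,4}`, `∂(psih i)/∂s = -i * psih (i-1)` and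
`Ld (psih i) = 0`, for all `s : ℝ` and `t > 0`. -/
theorem stmt_5
    (ε d₀ : ℝ) (hε : 0 < ε) (hd₀ : d₀ ∈ Set.Ioo (0 : ℝ) 1)
    (a : ℝ → ℝ → ℝ) (haC1 : ContDiff ℝ 1 (fun p : ℝ × ℝ => a p.1 p.2))
    (hapos : ∀ s t : ℝ, 0 ≤ t → 0 < a s t)
    (d : ℝ → ℝ) (hdC1 : ContDiff ℝ 1 d)
    (hdODE : ∀ t : ℝ, 0 ≤ t → HasDerivAt d (a (d t) t) t)
    (hd0 : d 0 = d₀) :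
    ∀ i : ℕ, i ∈ ({2, 3, 4} : Set ℕ) → ∀ s t : ℝ, 0 < t →
      deriv (fun x => psih ε d i x t) s = -(i : ℝ) * psih ε d (i - 1) s t ∧
      Ld ε a d (psih ε d i) s t = 0 := by
  intro i hi s t ht
  have h : 0 < ε * t := mul_pos hε ht
  have hq : 0 < Real.sqrt (ε * t) := Real.sqrt_pos.mpr h
  have hP : 0 < Real.sqrt Real.pi := Real.sqrt_pos.mpr Real.pi_pos
  have hq2 : Real.sqrt (ε * t) ^ 2 = ε * t := Real.sq_sqrt h.le
  have hq3 : Real.sqrt (ε * t) ^ 3 = (ε * t) * Real.sqrt (ε * t) := by rw [pow_succ, hq2]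
  have hq4 : Real.sqrt (ε * t) ^ 4 = (ε * t) ^ 2 := by
    rw [show (4:ℕ) = 2 * 2 from rfl, pow_mul, hq2]
  have hq5 : Real.sqrt (ε * t) ^ 5 = (ε * t) ^ 2 * Real.sqrt (ε * t) := by rw [pow_succ, hq4]
  have hq6 : Real.sqrt (ε * t) ^ 6 = (ε * t) ^ 3 := by
    rw [show (6:ℕ) = 2 * 3 from rfl, pow_mul, hq2]
  have hεne : ε ≠ 0 := hε.ne'
  have htne : t ≠ 0 := ht.ne'
  have he2 : Real.sqrt ε ^ 2 = ε := Real.sq_sqrt hε.le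
  have he3 : Real.sqrt ε ^ 3 = ε * Real.sqrt ε := by rw [pow_succ, he2]
  have he4 : Real.sqrt ε ^ 4 = ε ^ 2 := by rw [show (4:ℕ) = 2 * 2 from rfl, pow_mul, he2]
  have he5 : Real.sqrt ε ^ 5 = ε ^ 2 * Real.sqrt ε := by rw [pow_succ, he4]
  have he6 : Real.sqrt ε ^ 6 = ε ^ 3 := by rw [show (6:ℕ) = 2 * 3 from rfl, pow_mul, he2]
  have he7 : Real.sqrt ε ^ 7 = ε ^ 3 * Real.sqrt ε := by rw [pow_succ, he6]
  have ht2 : Real.sqrt t ^ 2 = t := Real.sq_sqrt ht.le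
  have ht3 : Real.sqrt t ^ 3 = t * Real.sqrt t := by rw [pow_succ, ht2]
  have ht4 : Real.sqrt t ^ 4 = t ^ 2 := by rw [show (4:ℕ) = 2 * 2 from rfl, pow_mul, ht2]
  have ht5 : Real.sqrt t ^ 5 = t ^ 2 * Real.sqrt t := by rw [pow_succ, ht4]
  have ht6 : Real.sqrt t ^ 6 = t ^ 3 := by rw [show (6:ℕ) = 2 * 3 from rfl, pow_mul, ht2]
  have ht7 : Real.sqrt t ^ 7 = t ^ 3 * Real.sqrt t := by rw [pow_succ, ht6]
  have hp2 : Real.sqrt Real.pi ^ 2 = Real.pi := Real.sq_sqrt Real.pi_pos.le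
  have hp3 : Real.sqrt Real.pi ^ 3 = Real.pi * Real.sqrt Real.pi := by rw [pow_succ, hp2]
  have hp4 : Real.sqrt Real.pi ^ 4 = Real.pi ^ 2 := by
    rw [show (4:ℕ) = 2 * 2 from rfl, pow_mul, hp2]
  have hp5 : Real.sqrt Real.pi ^ 5 = Real.pi ^ 2 * Real.sqrt Real.pi := by rw [pow_succ, hp4]
  have hp6 : Real.sqrt Real.pi ^ 6 = Real.pi ^ 3 := by
    rw [show (6:ℕ) = 2 * 3 from rfl, pow_mul, hp2]
  have hp7 : Real.sqrt Real.pi ^ 7 = Real.pi ^ 3 * Real.sqrt Real.pi := by rw [pow_succ, hp6]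
  have hp8 : Real.sqrt Real.pi ^ 8 = Real.pi ^ 4 := by
    rw [show (8:ℕ) = 2 * 4 from rfl, pow_mul, hp2]
  have hp9 : Real.sqrt Real.pi ^ 9 = Real.pi ^ 4 * Real.sqrt Real.pi := by rw [pow_succ, hp8]
  have hp10 : Real.sqrt Real.pi ^ 10 = Real.pi ^ 5 := by
    rw [show (10:ℕ) = 2 * 5 from rfl, pow_mul, hp2]
  have he8 : Real.sqrt ε ^ 8 = ε ^ 4 := by rw [show (8:ℕ) = 2 * 4 from rfl, pow_mul, he2]
  have he9 : Real.sqrt ε ^ 9 = ε ^ 4 * Real.sqrt ε := by rw [pow_succ, he8]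
  have he10 : Real.sqrt ε ^ 10 = ε ^ 5 := by rw [show (10:ℕ) = 2 * 5 from rfl, pow_mul, he2]
  have ht8 : Real.sqrt t ^ 8 = t ^ 4 := by rw [show (8:ℕ) = 2 * 4 from rfl, pow_mul, ht2]
  have ht9 : Real.sqrt t ^ 9 = t ^ 4 * Real.sqrt t := by rw [pow_succ, ht8]
  have ht10 : Real.sqrt t ^ 10 = t ^ 5 := by rw [show (10:ℕ) = 2 * 5 from rfl, pow_mul, ht2]
  have hp11 : Real.sqrt Real.pi ^ 11 = Real.pi ^ 5 * Real.sqrt Real.pi := by rw [pow_succ, hp10]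
  have hp12 : Real.sqrt Real.pi ^ 12 = Real.pi ^ 6 := by
    rw [show (12:ℕ) = 2 * 6 from rfl, pow_mul, hp2]
  have hp13 : Real.sqrt Real.pi ^ 13 = Real.pi ^ 6 * Real.sqrt Real.pi := by rw [pow_succ, hp12]
  have hA : HasDerivAt d (a (d t) t) t := hdODE t ht.le
  set A := a (d t) t with hAdef
  -- time derivatives
  have h0t := psi0_hasDerivAt_t ε d s t A h hA
  have h0t' : HasDerivAt (fun τ => psih ε d 0 s τ) _ t := h0t
  have h1t := psih1_hasDerivAt_t ε d s t A h hA
  have h2t : HasDerivAt (fun τ => psih ε d 2 s τ) _ t :=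
    psih_hasDerivAt_t_step ε d 0 s t A _ _ hA h1t h0t'
  have h3t : HasDerivAt (fun τ => psih ε d 3 s τ) _ t :=
    psih_hasDerivAt_t_step ε d 1 s t A _ _ hA h2t h1t
  have h4t : HasDerivAt (fun τ => psih ε d 4 s τ) _ t :=
    psih_hasDerivAt_t_step ε d 2 s t A _ _ hA h3t h2t
  -- expansions
  have e1 := psih1_eq ε d s t h
  have e2 : psih ε d 2 s t = (d t - s) * psih ε d 1 s t + 2 * (ε * t) * psi0 ε d s t := by
    rw [show psih ε d 2 s t = (d t - s) * psih ε d 1 s t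
      + 2 * ε * t * (((0:ℕ):ℝ) + 1) * psih ε d 0 s t from rfl,
      show psih ε d 0 s t = psi0 ε d s t from rfl]
    push_cast; ring
  have e3 : psih ε d 3 s t = (d t - s) * psih ε d 2 s t + 4 * (ε * t) * psih ε d 1 s t := by
    rw [show psih ε d 3 s t = (d t - s) * psih ε d 2 s t
      + 2 * ε * t * (((1:ℕ):ℝ) + 1) * psih ε d 1 s t from rfl]
    push_cast; ring
  obtain rfl | rfl | rfl : i = 2 ∨ i = 3 ∨ i = 4 := by simpa using hi
  · constructor
    · rw [(psih2_hasDerivAt_s ε d t h s).deriv]; norm_num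
    · have hdfun : deriv (fun x => psih ε d 2 x t) = fun x => -2 * psih ε d 1 x t :=
        funext fun x => (psih2_hasDerivAt_s ε d t h x).deriv
      have hItD : iteratedDeriv 2 (fun x => psih ε d 2 x t) s = -2 * -psi0 ε d s t := by
        conv_lhs => rw [show (2:ℕ) = 1 + 1 from rfl, iteratedDeriv_succ, iteratedDeriv_one]
        rw [hdfun]
        exact ((psih1_hasDerivAt_s ε d t h s).const_mul (-2)).deriv
      unfold Ld
      rw [hItD, (psih2_hasDerivAt_s ε d t h s).deriv, h2t.deriv, ← hAdef]
      rw [show psih ε d 0 s t = psi0 ε d s t from rfl, e1]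
      push_cast
      field_simp
      ring_nf
      simp only [hq2, hq3, hq4, hq5, hq6, he2, he3, he4, he5, he6, he7,
        he8, he9, he10, ht2, ht3, ht4, ht5, ht6, ht7, ht8, ht9, ht10,
        hp2, hp3, hp4, hp5, hp6, hp7, hp8, hp9, hp10, hp11, hp12, hp13]
      ring_nf
  · constructor
    · rw [(psih3_hasDerivAt_s ε d t h s).deriv]; norm_num
    · have hdfun : deriv (fun x => psih ε d 3 x t) = fun x => -3 * psih ε d 2 x t :=
        funext fun x => (psih3_hasDerivAt_s ε d t h x).deriv
      have hItD : iteratedDeriv 2 (fun x => psih ε d 3 x t) s = -3 * (-2 * psih ε d 1 s t) := by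
        conv_lhs => rw [show (2:ℕ) = 1 + 1 from rfl, iteratedDeriv_succ, iteratedDeriv_one]
        rw [hdfun]
        exact ((psih2_hasDerivAt_s ε d t h s).const_mul (-3)).deriv
      unfold Ld
      rw [hItD, (psih3_hasDerivAt_s ε d t h s).deriv, h3t.deriv, ← hAdef]
      simp only [show (0:ℕ) + 1 = 1 from rfl, show (1:ℕ) + 1 = 2 from rfl,
        show (2:ℕ) + 1 = 3 from rfl]
      rw [e2, e1, show psih ε d 0 s t = psi0 ε d s t from rfl]
      push_cast
      field_simp
      ring_nf
      simp only [hq2, hq3, hq4, hq5, hq6, he2, he3, he4, he5, he6, he7,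
        he8, he9, he10, ht2, ht3, ht4, ht5, ht6, ht7, ht8, ht9, ht10,
        hp2, hp3, hp4, hp5, hp6, hp7, hp8, hp9, hp10, hp11, hp12, hp13]
      ring_nf
  · constructor
    · rw [(psih4_hasDerivAt_s ε d t h s).deriv]; norm_num
    · have hdfun : deriv (fun x => psih ε d 4 x t) = fun x => -4 * psih ε d 3 x t :=
        funext fun x => (psih4_hasDerivAt_s ε d t h x).deriv
      have hItD : iteratedDeriv 2 (fun x => psih ε d 4 x t) s = -4 * (-3 * psih ε d 2 s t) := by
        conv_lhs => rw [show (2:ℕ) = 1 + 1 from rfl, iteratedDeriv_succ, iteratedDeriv_one]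
        rw [hdfun]
        exact ((psih3_hasDerivAt_s ε d t h s).const_mul (-4)).deriv
      unfold Ld
      rw [hItD, (psih4_hasDerivAt_s ε d t h s).deriv, h4t.deriv, ← hAdef]
      simp only [show (0:ℕ) + 1 = 1 from rfl, show (1:ℕ) + 1 = 2 from rfl,
        show (2:ℕ) + 1 = 3 from rfl]
      rw [e3, e2, e1, show psih ε d 0 s t = psi0 ε d s t from rfl]
      push_cast
      field_simp
      ring_nf
      simp only [hq2, hq3, hq4, hq5, hq6, he2, he3, he4, he5, he6, he7,
        he8, he9, he10, ht2, ht3, ht4, ht5, ht6, ht7, ht8, ht9, ht10,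
        hp2, hp3, hp4, hp5, hp6, hp7, hp8, hp9, hp10, hp11, hp12, hp13]
      ring_nf
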